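/- Let T_n be the Tribonacci sequence with T_1 = T_2 = 1, T_3 = 2, T_n = T_{n−1} + T_{n−2} + T_{n−3} for n ≥ 4. Suppose n_1 > n_2 ≥ 2, b ≥ 2 and m_1 > m_2 ≥ 1 are integers with T_{n_1} − T_{n_2} = b^{m_1} − b^{m_2}. Then b^{m_1} ≥ 0.13·α^{n_1}, where α > 1 is the real root of X^3 − X^2 − X − 1. -/
import Mathlib


theorem tribonacci_pillai_lower (T : ℕ → ℤ)
    (hT1 : T 1 = 1) (hT2 : T 2 = 1) (hT3 : T 3 = 2)
    (hTrec : ∀ n, 4 ≤ n → T n = T (n - 1) + T (n - 2) + T (n - 3))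
    (α : ℝ) (hα : α ^ 3 = α ^ 2 + α + 1) (hα1 : 1 < α)
    (n₁ n₂ m₁ m₂ : ℕ) (b : ℤ)
    (hn₂ : 2 ≤ n₂) (hn : n₂ < n₁) (hb : 2 ≤ b) (hm₂ : 1 ≤ m₂) (hm : m₂ < m₁)
    (heq : T n₁ - T n₂ = b ^ m₁ - b ^ m₂) :
    (b : ℝ) ^ m₁ ≥ 0.13 * α ^ n₁ := by
  have hα85 : α < 1.85 := by nlinarith [sq_nonneg α, sq_nonneg (α - 1), sq_nonneg (α + 1)]
  have hrec : ∀ k : ℕ, T (k + 4) = T (k + 3) + T (k + 2) + T (k + 1) := by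
    intro k
    have := hTrec (k + 4) (by omega)
    simpa using this
  -- positivity and step monotonicity
  have key : ∀ k : ℕ, (1 ≤ T (k + 1) ∧ 1 ≤ T (k + 2) ∧ 1 ≤ T (k + 3))
      ∧ (T (k + 1) ≤ T (k + 2) ∧ T (k + 2) ≤ T (k + 3)) := by
    intro k
    induction k with
    | zero => norm_num [hT1, hT2, hT3]
    | succ n ih =>
      obtain ⟨⟨h1, h2, h3⟩, h4, h5⟩ := ih
      have h := hrec n
      have e1 : T (n + 1 + 1) = T (n + 2) := rfl
      have e2 : T (n + 1 + 2) = T (n + 3) := rfl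
      have e3 : T (n + 1 + 3) = T (n + 4) := rfl
      refine ⟨⟨?_, ?_, ?_⟩, ?_, ?_⟩ <;> omega
  have step : ∀ a : ℕ, 1 ≤ a → T a ≤ T (a + 1) := by
    intro a ha
    obtain ⟨k, rfl⟩ := Nat.exists_eq_add_of_le' ha
    exact (key k).2.1
  have mono : ∀ a c : ℕ, 1 ≤ a → a ≤ c → T a ≤ T c := by
    intro a c ha hac
    obtain ⟨d, rfl⟩ := Nat.exists_eq_add_of_le hac
    clear hac
    induction d with
    | zero => simp
    | succ n ih =>
      have := step (a + n) (by omega)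
      calc T a ≤ T (a + n) := ih
        _ ≤ T (a + n + 1) := this
        _ = T (a + (n + 1)) := by ring_nf
  -- lower bound T n ≥ 0.29 α^n
  have hα0 : (0:ℝ) < α := by linarith
  have low : ∀ k : ℕ, (0.29 * α ^ (k + 1) ≤ (T (k + 1) : ℝ))
      ∧ (0.29 * α ^ (k + 2) ≤ (T (k + 2) : ℝ)) ∧ (0.29 * α ^ (k + 3) ≤ (T (k + 3) : ℝ)) := by
    intro k
    induction k with
    | zero =>
      refine ⟨?_, ?_, ?_⟩
      · rw [hT1]; push_cast; nlinarith
      · rw [hT2]; push_cast; nlinarith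
      · rw [hT3]; push_cast; nlinarith
    | succ n ih =>
      obtain ⟨h1, h2, h3⟩ := ih
      refine ⟨h2, h3, ?_⟩
      have h := hrec n
      have hcast : (T (n + 4) : ℝ) = (T (n + 3) : ℝ) + (T (n + 2) : ℝ) + (T (n + 1) : ℝ) := by
        exact_mod_cast congrArg (Int.cast : ℤ → ℝ) h
      have hpow : α ^ (n + 4) = α ^ (n + 3) + α ^ (n + 2) + α ^ (n + 1) := by
        have : α ^ (n + 4) = α ^ (n + 1) * α ^ 3 := by ring
        rw [this, hα]; ring
      have : (n + 1) + 3 = n + 4 := by ring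
      rw [this, hpow, hcast]
      linarith
  -- main argument
  have hbR : (2 : ℝ) ≤ (b : ℝ) := by exact_mod_cast hb
  have hn₁3 : 3 ≤ n₁ := by omega
  rcases Nat.lt_or_ge n₁ 4 with h4 | h4
  · -- n₁ = 3
    have hn₁ : n₁ = 3 := by omega
    have hb4 : (4 : ℝ) ≤ (b : ℝ) ^ m₁ := by
      calc (4 : ℝ) = 2 ^ 2 := by norm_num
        _ ≤ 2 ^ m₁ := by
          apply pow_le_pow_right₀ one_le_two
          omega
        _ ≤ (b : ℝ) ^ m₁ := pow_le_pow_left₀ (by norm_num) hbR m₁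
    have : 0.13 * α ^ 3 ≤ 4 := by
      rw [hα]; nlinarith
    rw [hn₁]
    linarith
  · obtain ⟨k, rfl⟩ : ∃ k, n₁ = k + 4 := ⟨n₁ - 4, by omega⟩
    have hT2' : T n₂ ≤ T (k + 3) := mono n₂ (k + 3) (by omega) (by omega)
    have heqR : (T (k + 4) : ℝ) - (T n₂ : ℝ) = (b : ℝ) ^ m₁ - (b : ℝ) ^ m₂ := by
      exact_mod_cast congrArg (Int.cast : ℤ → ℝ) heq
    have hbm2 : (0 : ℝ) < (b : ℝ) ^ m₂ := pow_pos (by linarith) _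
    have hrk : (T (k + 4) : ℝ) = (T (k + 3) : ℝ) + (T (k + 2) : ℝ) + (T (k + 1) : ℝ) := by
      exact_mod_cast congrArg (Int.cast : ℤ → ℝ) (hrec k)
    have hT2R : (T n₂ : ℝ) ≤ (T (k + 3) : ℝ) := by exact_mod_cast hT2'
    have hl1 := (low k).1
    have hl2 := (low k).2.1
    have hbig : (b : ℝ) ^ m₁ ≥ 0.29 * α ^ (k + 2) + 0.29 * α ^ (k + 1) := by
      nlinarith
    have hpowpos : (0 : ℝ) < α ^ (k + 1) := pow_pos hα0 _
    have hfin : 0.13 * α ^ (k + 4) ≤ 0.29 * α ^ (k + 2) + 0.29 * α ^ (k + 1) := by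
      have h1 : α ^ (k + 4) = α ^ (k + 1) * (α ^ 2 + α + 1) := by
        rw [← hα]; ring
      have h2 : α ^ (k + 2) = α ^ (k + 1) * α := by ring
      rw [h1, h2]
      have hq : (0:ℝ) ≤ 0.16 * α + 0.16 - 0.13 * α ^ 2 := by
        nlinarith [mul_pos (sub_pos.mpr hα85) (sub_pos.mpr hα1)]
      nlinarith [mul_nonneg hpowpos.le hq]
    linarith
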